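/- Let ℝ² be endowed with the supremum norm ‖(x,y)‖ = max{|x|, |y|}, and define f : ℝ → ℝ² by f(t) = (t, sin t). Then f satisfies {‖f(s)+f(t)‖, ‖f(s)−f(t)‖} = {|s+t|, |s−t|} for all s, t ∈ ℝ, but there is no linear isometry U : ℝ → ℝ² and no function σ : ℝ → {−1,1} such that f(t) = σ(t) • U(t) for all t ∈ ℝ. -/

import Mathlib

open Real

lemma abs_sin_sub_sin_le (a b : ℝ) : |Real.sin a - Real.sin b| ≤ |a - b| := by
  rw [Real.sin_sub_sin]
  calc |2 * Real.sin ((a - b) / 2) * Real.cos ((a + b) / 2)|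
      = 2 * |Real.sin ((a - b) / 2)| * |Real.cos ((a + b) / 2)| := by
        rw [abs_mul, abs_mul, abs_two]
    _ ≤ 2 * |(a - b) / 2| * 1 := by
        have h1 : |Real.sin ((a - b) / 2)| ≤ |(a - b) / 2| := Real.abs_sin_le_abs
        have h2 : |Real.cos ((a + b) / 2)| ≤ 1 := Real.abs_cos_le_one _
        exact mul_le_mul (mul_le_mul_of_nonneg_left h1 (by norm_num)) h2
          (abs_nonneg _) (by positivity)
    _ = |a - b| := by rw [abs_div, abs_two]; ring

lemma abs_sin_add_sin_le (a b : ℝ) : |Real.sin a + Real.sin b| ≤ |a + b| := by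
  have := _root_.abs_sin_sub_sin_le a (-b)
  simpa [Real.sin_neg, sub_eq_add_neg] using this

theorem sin_example_phase_isometry_not_phase_equivalent :
    (∀ s t : ℝ,
      ({‖((s, Real.sin s) : ℝ × ℝ) + (t, Real.sin t)‖,
        ‖((s, Real.sin s) : ℝ × ℝ) - (t, Real.sin t)‖} : Set ℝ) = {|s + t|, |s - t|}) ∧
    ¬ ∃ U : ℝ →ₗᵢ[ℝ] ℝ × ℝ, ∃ σ : ℝ → ℝ, (∀ t : ℝ, σ t = 1 ∨ σ t = -1) ∧
        ∀ t : ℝ, ((t, Real.sin t) : ℝ × ℝ) = σ t • U t := by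
  constructor
  · intro s t
    have h1 : ‖((s, Real.sin s) : ℝ × ℝ) + (t, Real.sin t)‖ = |s + t| := by
      simp only [Prod.mk_add_mk, Prod.norm_def, Real.norm_eq_abs]
      exact max_eq_left (abs_sin_add_sin_le s t)
    have h2 : ‖((s, Real.sin s) : ℝ × ℝ) - (t, Real.sin t)‖ = |s - t| := by
      simp only [Prod.mk_sub_mk, Prod.norm_def, Real.norm_eq_abs]
      exact max_eq_left (_root_.abs_sin_sub_sin_le s t)
    rw [h1, h2]
  · rintro ⟨U, σ, hσ, hf⟩
    have hU : ∀ t : ℝ, U t = t • U 1 := fun t => by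
      rw [← U.map_smul, smul_eq_mul, mul_one]
    have hπ := congrArg Prod.snd (hf π)
    simp only [hU π, Prod.smul_snd, smul_eq_mul, Real.sin_pi] at hπ
    have hmul : π * (U 1).2 = 0 := by
      rcases hσ π with h | h <;> rw [h] at hπ <;> linarith
    have hu2 : (U 1).2 = 0 :=
      (mul_eq_zero.1 hmul).resolve_left Real.pi_ne_zero
    have h2 := congrArg Prod.snd (hf (π / 2))
    simp only [hU (π / 2), Prod.smul_snd, smul_eq_mul, Real.sin_pi_div_two, hu2,
      mul_zero] at h2
    exact one_ne_zero h2
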